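/- Let X, Y be real Hilbert spaces, T : X → Y a bounded linear operator, f† ∈ X, n ≥ 1 and m ≥ n integers, ν ∈ (0,1] and A > 0, and assume VSC^{2n−1}(f†, Φ) holds with Φ(t) = A t^{ν/(ν+1)}. Then there exists C > 0 such that for every δ > 0 and every g ∈ Y with ‖g − T f†‖ ≤ δ, every Bregman-iterated Tikhonov sequence (f_k) for the data (g, α) with the parameter choice α := δ^{2/(2n−1+ν)} satisfies ‖f_m − f†‖ ≤ C δ^{(2n−2+ν)/(2n−1+ν)}. -/

import Mathlib

open scoped RealInnerProductSpace

open ContinuousLinearMap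
noncomputable section
set_option linter.unusedSectionVars false
set_option maxHeartbeats 1000000
variable {X Y : Type*}
    [NormedAddCommGroup X] [InnerProductSpace ℝ X] [CompleteSpace X]
    [NormedAddCommGroup Y] [InnerProductSpace ℝ Y] [CompleteSpace Y]

lemma sq_le_imp_le {a b : ℝ} (h : a ^ 2 ≤ b ^ 2) (ha : 0 ≤ a) (hb : 0 ≤ b) : a ≤ b := by
  nlinarith

lemma expand_sq (a b : X) (t : ℝ) :
    ‖a - t • b‖ ^ 2 = ‖a‖ ^ 2 - 2 * t * ⟪a, b⟫ + t ^ 2 * ‖b‖ ^ 2 := by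
  rw [norm_sub_sq_real, real_inner_smul_right, norm_smul]
  simp [mul_pow, sq_abs]
  ring

lemma exists_resolvent (T : X →L[ℝ] Y) (α : ℝ) (hα : 0 < α) :
    ∃ R : X →L[ℝ] X,
      (∀ x, R ((ContinuousLinearMap.adjoint T) (T x) + α • x) = x) ∧
      (∀ x, (ContinuousLinearMap.adjoint T) (T (R x)) + α • (R x) = x) := by
  set L : X →L[ℝ] X := (ContinuousLinearMap.adjoint T).comp T + α • ContinuousLinearMap.id ℝ X
    with hL
  have hLapp : ∀ x, L x = (ContinuousLinearMap.adjoint T) (T x) + α • x := by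
    intro x; simp [hL]
  have coercive : IsCoercive ((innerSL ℝ).comp L) := by
    refine ⟨α, hα, fun u => ?_⟩
    have h0 : ((innerSL ℝ).comp L) u u = ⟪L u, u⟫ := rfl
    rw [h0, hLapp, inner_add_left, real_inner_smul_left,
      ContinuousLinearMap.adjoint_inner_left]
    simp only [real_inner_self_eq_norm_sq]
    nlinarith [norm_nonneg u, sq_nonneg ‖T u‖]
  set E := coercive.continuousLinearEquivOfBilin with hE
  have hEL : ∀ v, E v = L v := by
    intro v
    have h : ∀ w, ⟪E v - L v, w⟫ = 0 := by
      intro w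
      have h1 := coercive.continuousLinearEquivOfBilin_apply v w
      rw [← hE] at h1
      rw [inner_sub_left, h1]
      exact sub_self _
    have h2 : ‖E v - L v‖ ^ 2 = 0 := by rw [← real_inner_self_eq_norm_sq]; exact h _
    have h3 : E v - L v = 0 := norm_eq_zero.mp (pow_eq_zero_iff two_ne_zero |>.mp h2)
    exact sub_eq_zero.mp h3
  refine ⟨(E.symm : X →L[ℝ] X), fun x => ?_, fun x => ?_⟩
  · rw [← hLapp, ← hEL]
    exact E.symm_apply_apply x
  · rw [← hLapp, ← hEL]
    exact E.apply_symm_apply x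

lemma core (T : X →L[ℝ] Y) (n m : ℕ) (hn : 1 ≤ n) (hnm : n ≤ m)
    (ν A α : ℝ) (hν : 0 < ν) (hν1 : ν ≤ 1) (hA : 0 < A) (hα : 0 < α)
    (ω : X)
    (hVSC : ∀ f : X, ⟪ω, f⟫ ≤ 1 / 2 * ‖f‖ ^ 2 + A * (‖T f‖ ^ 2) ^ (ν / (ν + 1)))
    (η : Y) (e : ℕ → X)
    (he0 : e 0 = -(((ContinuousLinearMap.adjoint T ∘L T) ^ (n - 1)) ω))
    (hrec : ∀ k : ℕ, (ContinuousLinearMap.adjoint T) (T (e (k + 1))) + α • e (k + 1)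
        = (ContinuousLinearMap.adjoint T) η + α • e k) :
    ‖e m‖ ≤ (2 * A) ^ ((ν + 1) / 2) * (α ^ (n - 1) * α ^ (ν / 2))
        + m * (‖η‖ / (2 * Real.sqrt α)) := by
  obtain ⟨R, hR1, hR2⟩ := exists_resolvent T α hα
  set Sc : X →L[ℝ] X := ContinuousLinearMap.adjoint T ∘L T with hSc
  have hScapp : ∀ x, Sc x = (ContinuousLinearMap.adjoint T) (T x) := fun _ => rfl
  -- basic inner product identity
  have hIP : ∀ x, ⟪x, R x⟫ = ‖T (R x)‖ ^ 2 + α * ‖R x‖ ^ 2 := by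
    intro x
    have h1 : ⟪x, R x⟫ = ⟪(ContinuousLinearMap.adjoint T) (T (R x)) + α • R x, R x⟫ := by
      rw [hR2]
    rw [h1, inner_add_left, real_inner_smul_left, ContinuousLinearMap.adjoint_inner_left,
      real_inner_self_eq_norm_sq, real_inner_self_eq_norm_sq]
  have hRle : ∀ x, α * ‖R x‖ ≤ ‖x‖ := by
    intro x
    have h1 := hIP x
    have h2 : ⟪x, R x⟫ ≤ ‖x‖ * ‖R x‖ := real_inner_le_norm x (R x)
    rcases eq_or_lt_of_le (norm_nonneg (R x)) with h | h
    · rw [← h]; simpa using norm_nonneg x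
    · nlinarith [sq_nonneg ‖T (R x)‖]
  have hTRle : ∀ x, ‖T (R x)‖ ^ 2 ≤ ‖x‖ ^ 2 / α := by
    intro x
    have h1 := hIP x
    have h2 : ⟪x, R x⟫ ≤ ‖x‖ * ‖R x‖ := real_inner_le_norm x (R x)
    have h3 := hRle x
    rw [le_div_iff₀ hα]
    nlinarith [sq_nonneg ‖R x‖, norm_nonneg x, norm_nonneg (R x), sq_nonneg (α * ‖R x‖)]
  have hsqrtα : 0 < Real.sqrt α := Real.sqrt_pos.mpr hα
  have hRT : ∀ y, ‖R ((ContinuousLinearMap.adjoint T) y)‖ ≤ ‖y‖ / (2 * Real.sqrt α) := by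
    intro y
    set x := R ((ContinuousLinearMap.adjoint T) y) with hx
    have h1 : ⟪(ContinuousLinearMap.adjoint T) y, x⟫ = ‖T x‖ ^ 2 + α * ‖x‖ ^ 2 := hIP _
    have h2 : ⟪(ContinuousLinearMap.adjoint T) y, x⟫ = ⟪y, T x⟫ := by
      rw [ContinuousLinearMap.adjoint_inner_left]
    have h3 : ⟪y, T x⟫ ≤ ‖y‖ * ‖T x‖ := real_inner_le_norm y (T x)
    have h4 : α * ‖x‖ ^ 2 ≤ ‖y‖ ^ 2 / 4 := by nlinarith [sq_nonneg (‖T x‖ - ‖y‖ / 2)]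
    have h5 : ‖x‖ ^ 2 ≤ (‖y‖ / (2 * Real.sqrt α)) ^ 2 := by
      have hsq : Real.sqrt α ^ 2 = α := Real.sq_sqrt hα.le
      rw [div_pow, mul_pow]
      rw [hsq]
      rw [le_div_iff₀ (by positivity)]
      nlinarith
    exact sq_le_imp_le h5 (norm_nonneg x) (by positivity)
  -- the operators B and D
  set B : X →L[ℝ] X := α • R with hB
  set D : X →L[ℝ] X := 1 - B with hD
  have hBapp : ∀ x, B x = α • R x := fun x => rfl
  have hDapp : ∀ x, D x = x - α • R x := by
    intro x; simp [hD, ContinuousLinearMap.sub_apply, hBapp]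
  have hBnorm : ∀ x, ‖B x‖ ≤ ‖x‖ := by
    intro x
    rw [hBapp, norm_smul, Real.norm_eq_abs, abs_of_pos hα]
    exact hRle x
  have hTB : ∀ x, ‖T (B x)‖ ^ 2 ≤ α * ‖x‖ ^ 2 := by
    intro x
    rw [hBapp, map_smul, norm_smul, Real.norm_eq_abs, abs_of_pos hα, mul_pow]
    have := hTRle x
    calc α ^ 2 * ‖T (R x)‖ ^ 2 ≤ α ^ 2 * (‖x‖ ^ 2 / α) := by nlinarith [sq_nonneg α]
      _ = α * ‖x‖ ^ 2 := by field_simp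
  have hDnorm : ∀ x, ‖D x‖ ≤ ‖x‖ := by
    intro x
    have h1 : ‖D x‖ ^ 2 ≤ ‖x‖ ^ 2 := by
      rw [hDapp, expand_sq, hIP]
      nlinarith [sq_nonneg ‖T (R x)‖, sq_nonneg (α * ‖R x‖), sq_nonneg ‖R x‖]
    exact sq_le_imp_le h1 (norm_nonneg _) (norm_nonneg _)
  -- commutation facts
  have hRS : ∀ x, R (Sc x) = Sc (R x) := by
    intro x
    have h1 : Sc x = (ContinuousLinearMap.adjoint T) (T (Sc (R x))) + α • Sc (R x) := by
      conv_lhs => rw [show x = (ContinuousLinearMap.adjoint T) (T (R x)) + α • R x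
        from (hR2 x).symm]
      rw [← hScapp, ← hScapp, map_add, map_smul]
    rw [h1, hR1]
  have hSB : ∀ x, Sc (B x) = B (Sc x) := by
    intro x; rw [hBapp, hBapp, map_smul, hRS]
  have hSD : ∀ x, Sc (D x) = D (Sc x) := by
    intro x
    simp only [hD, ContinuousLinearMap.sub_apply, ContinuousLinearMap.one_apply, map_sub, hSB]
  have hDSc : ∀ x, D x = Sc (R x) := by
    intro x
    rw [hDapp]
    have := hR2 x
    rw [← hScapp] at this
    exact (eq_sub_of_add_eq' ((add_comm _ _).trans this)).symm
  have hBS : ∀ x, B (Sc x) = α • D x := by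
    intro x
    rw [hBapp, hRS, ← hDSc]
  -- powers
  have hpowB : ∀ (j : ℕ) (x : X), ‖(B ^ j) x‖ ≤ ‖x‖ := by
    intro j
    induction j with
    | zero => intro x; simp
    | succ j ih =>
      intro x
      rw [pow_succ', ContinuousLinearMap.mul_apply]
      exact (hBnorm _).trans (ih x)
  have hpowD : ∀ (j : ℕ) (x : X), ‖(D ^ j) x‖ ≤ ‖x‖ := by
    intro j
    induction j with
    | zero => intro x; simp
    | succ j ih =>
      intro x
      rw [pow_succ', ContinuousLinearMap.mul_apply]
      exact (hDnorm _).trans (ih x)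
  have hScDj : ∀ (j : ℕ) (x : X), D ((Sc ^ j) x) = (Sc ^ j) (D x) := by
    intro j
    induction j with
    | zero => intro x; simp
    | succ j ih =>
      intro x
      rw [pow_succ', ContinuousLinearMap.mul_apply, ContinuousLinearMap.mul_apply,
        ← hSD, ih]
  have hkeyj : ∀ (j : ℕ) (x : X), (B ^ j) ((Sc ^ j) x) = α ^ j • (D ^ j) x := by
    intro j
    induction j with
    | zero => intro x; simp
    | succ j ih =>
      intro x
      rw [pow_succ B, pow_succ' Sc, ContinuousLinearMap.mul_apply,
        ContinuousLinearMap.mul_apply]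
      have h1 : B (Sc ((Sc ^ j) x)) = α • D ((Sc ^ j) x) := hBS _
      rw [h1, hScDj, map_smul, ih, pow_succ D, ContinuousLinearMap.mul_apply]
      rw [smul_smul, pow_succ' α j]
  -- the operator Q
  set Q : X →L[ℝ] X := B ^ (m - n + 1) * D ^ (n - 1) with hQ
  have hQapp : ∀ x, Q x = (B ^ (m - n + 1)) ((D ^ (n - 1)) x) := fun x => rfl
  have hQnorm : ∀ x, ‖Q x‖ ≤ ‖x‖ := by
    intro x; rw [hQapp]; exact (hpowB _ _).trans (hpowD _ _)
  have hTQ : ∀ x, ‖T (Q x)‖ ^ 2 ≤ α * ‖x‖ ^ 2 := by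
    intro x
    have h1 : Q x = B ((B ^ (m - n)) ((D ^ (n - 1)) x)) := by
      rw [hQapp, pow_succ', ContinuousLinearMap.mul_apply]
    rw [h1]
    have h2 : ‖(B ^ (m - n)) ((D ^ (n - 1)) x)‖ ≤ ‖x‖ := (hpowB _ _).trans (hpowD _ _)
    calc ‖T (B ((B ^ (m - n)) ((D ^ (n - 1)) x)))‖ ^ 2
        ≤ α * ‖(B ^ (m - n)) ((D ^ (n - 1)) x)‖ ^ 2 := hTB _
      _ ≤ α * ‖x‖ ^ 2 := by
          have := pow_le_pow_left₀ (norm_nonneg _) h2 2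
          nlinarith
  -- self-adjointness
  have hRsa : ∀ x y, ⟪R x, y⟫ = ⟪x, R y⟫ := by
    intro x y
    have h1 : ⟪R x, y⟫
        = ⟪R x, (ContinuousLinearMap.adjoint T) (T (R y))⟫ + α * ⟪R x, R y⟫ := by
      conv_lhs => rw [show y = (ContinuousLinearMap.adjoint T) (T (R y)) + α • R y
        from (hR2 y).symm]
      rw [inner_add_right, real_inner_smul_right]
    have h2 : ⟪x, R y⟫
        = ⟪(ContinuousLinearMap.adjoint T) (T (R x)), R y⟫ + α * ⟪R x, R y⟫ := by
      conv_lhs => rw [show x = (ContinuousLinearMap.adjoint T) (T (R x)) + α • R x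
        from (hR2 x).symm]
      rw [inner_add_left, real_inner_smul_left]
    rw [h1, h2, ContinuousLinearMap.adjoint_inner_left, ContinuousLinearMap.adjoint_inner_right]
  have hBsa : ∀ x y, ⟪B x, y⟫ = ⟪x, B y⟫ := by
    intro x y
    rw [hBapp, hBapp, real_inner_smul_left, real_inner_smul_right, hRsa]
  have hDsa : ∀ x y, ⟪D x, y⟫ = ⟪x, D y⟫ := by
    intro x y
    rw [hDapp, hDapp, inner_sub_left, inner_sub_right, real_inner_smul_left,
      real_inner_smul_right, hRsa]
  have hBjsa : ∀ (j : ℕ) (x y : X), ⟪(B ^ j) x, y⟫ = ⟪x, (B ^ j) y⟫ := by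
    intro j
    induction j with
    | zero => intro x y; simp
    | succ j ih =>
      intro x y
      rw [pow_succ B]
      simp only [ContinuousLinearMap.mul_apply]
      rw [ih, hBsa]
      have hbb : B ((B ^ j) y) = (B ^ j) (B y) :=
        ContinuousLinearMap.ext_iff.mp ((Commute.refl B).pow_right j).eq y
      rw [hbb]
  have hDjsa : ∀ (j : ℕ) (x y : X), ⟪(D ^ j) x, y⟫ = ⟪x, (D ^ j) y⟫ := by
    intro j
    induction j with
    | zero => intro x y; simp
    | succ j ih =>
      intro x y
      rw [pow_succ D]
      simp only [ContinuousLinearMap.mul_apply]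
      rw [ih, hDsa]
      have hdd : D ((D ^ j) y) = (D ^ j) (D y) :=
        ContinuousLinearMap.ext_iff.mp ((Commute.refl D).pow_right j).eq y
      rw [hdd]
  have hBD : Commute B D := (Commute.one_right B).sub_right (Commute.refl B)
  have hQsa : ∀ x y, ⟪Q x, y⟫ = ⟪x, Q y⟫ := by
    intro x y
    rw [hQapp, hBjsa, hDjsa, hQapp]
    congr 1
    have hc : D ^ (n - 1) * B ^ (m - n + 1) = B ^ (m - n + 1) * D ^ (n - 1) :=
      ((hBD.pow_pow (m - n + 1) (n - 1)).eq).symm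
    calc (D ^ (n - 1)) ((B ^ (m - n + 1)) y) = (D ^ (n - 1) * B ^ (m - n + 1)) y := rfl
      _ = (B ^ (m - n + 1) * D ^ (n - 1)) y := by rw [hc]
      _ = (B ^ (m - n + 1)) ((D ^ (n - 1)) y) := rfl
  -- VSC estimate
  have hν1' : (0:ℝ) < ν + 1 := by linarith
  set κ := ν / (ν + 1) with hκ
  have hκpos : 0 < κ := div_pos hν hν1'
  have hκlt1 : κ < 1 := by rw [hκ, div_lt_one hν1']; linarith
  set s := ‖Q ω‖ with hs
  have h2A : (0:ℝ) < 2 * A := by linarith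
  have hinner : ⟪ω, Q (Q ω)⟫ = s ^ 2 := by
    rw [← hQsa, real_inner_self_eq_norm_sq]
  have hvsc1 : s ^ 2 ≤ 1 / 2 * s ^ 2 + A * (α * s ^ 2) ^ κ := by
    have h0 := hVSC (Q (Q ω))
    rw [hinner] at h0
    have h2 : ‖Q (Q ω)‖ ^ 2 ≤ s ^ 2 := pow_le_pow_left₀ (norm_nonneg _) (hQnorm _) 2
    have h3 : ‖T (Q (Q ω))‖ ^ 2 ≤ α * s ^ 2 := hTQ (Q ω)
    have h4 : (‖T (Q (Q ω))‖ ^ 2 : ℝ) ^ κ ≤ (α * s ^ 2) ^ κ :=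
      Real.rpow_le_rpow (by positivity) h3 hκpos.le
    have h5 := mul_le_mul_of_nonneg_left h4 hA.le
    linarith
  have hsle : s ≤ (2 * A) ^ ((ν + 1) / 2) * α ^ (ν / 2) := by
    rcases eq_or_lt_of_le (norm_nonneg (Q ω)) with h | h
    · rw [hs, ← h]
      have : (0:ℝ) < (2 * A) ^ ((ν + 1) / 2) * α ^ (ν / 2) :=
        mul_pos (Real.rpow_pos_of_pos h2A _) (Real.rpow_pos_of_pos hα _)
      linarith
    · have hspos : 0 < s := h
      have hu : (0:ℝ) < s ^ 2 := by positivity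
      have hmain : s ^ 2 ≤ 2 * A * (α ^ κ * (s ^ 2) ^ κ) := by
        have hmr : (α * s ^ 2) ^ κ = α ^ κ * (s ^ 2) ^ κ := Real.mul_rpow hα.le (by positivity)
        rw [hmr] at hvsc1
        linarith
      have hdiv : (s ^ 2) ^ (1 - κ) ≤ 2 * A * α ^ κ := by
        rw [Real.rpow_sub hu, Real.rpow_one, div_le_iff₀ (Real.rpow_pos_of_pos hu κ)]
        calc s ^ 2 ≤ 2 * A * (α ^ κ * (s ^ 2) ^ κ) := hmain
          _ = 2 * A * α ^ κ * (s ^ 2) ^ κ := by ring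
      have hfin : s ^ 2 ≤ (2 * A) ^ (ν + 1) * α ^ ν := by
        have h5 := Real.rpow_le_rpow (Real.rpow_nonneg hu.le _) hdiv (le_of_lt hν1')
        have hone : (1 - κ) * (ν + 1) = 1 := by
          rw [hκ]; field_simp; ring
        have hL : ((s ^ 2) ^ (1 - κ)) ^ (ν + 1) = s ^ 2 := by
          rw [← Real.rpow_mul hu.le, hone, Real.rpow_one]
        have hnu : κ * (ν + 1) = ν := by rw [hκ]; field_simp
        have hR' : (2 * A * α ^ κ) ^ (ν + 1) = (2 * A) ^ (ν + 1) * α ^ ν := by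
          rw [Real.mul_rpow h2A.le (Real.rpow_nonneg hα.le _),
            ← Real.rpow_mul hα.le, hnu]
        rw [hL, hR'] at h5
        exact h5
      have hhalf : s = (s ^ 2) ^ (1 / 2 : ℝ) := by
        rw [← Real.rpow_natCast s 2, ← Real.rpow_mul (norm_nonneg _)]
        norm_num
        exact hs
      calc s = (s ^ 2) ^ (1 / 2 : ℝ) := hhalf
        _ ≤ ((2 * A) ^ (ν + 1) * α ^ ν) ^ (1 / 2 : ℝ) :=
            Real.rpow_le_rpow hu.le hfin (by norm_num)
        _ = (2 * A) ^ ((ν + 1) / 2) * α ^ (ν / 2) := by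
            rw [Real.mul_rpow (Real.rpow_nonneg h2A.le _) (Real.rpow_nonneg hα.le _),
              ← Real.rpow_mul h2A.le, ← Real.rpow_mul hα.le]
            ring_nf
  -- the error recursion
  have hrecR : ∀ k, e (k + 1) = R ((ContinuousLinearMap.adjoint T) η) + B (e k) := by
    intro k
    have h1 : e (k + 1)
        = R ((ContinuousLinearMap.adjoint T) (T (e (k + 1))) + α • e (k + 1)) := (hR1 _).symm
    rw [h1, hrec k, map_add, map_smul, hBapp]
  have hsum : ∀ k : ℕ, ‖e k - (B ^ k) (e 0)‖ ≤ k * (‖η‖ / (2 * Real.sqrt α)) := by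
    intro k
    induction k with
    | zero => simp
    | succ k ih =>
      have h1 : e (k + 1) - (B ^ (k + 1)) (e 0)
          = R ((ContinuousLinearMap.adjoint T) η) + B (e k - (B ^ k) (e 0)) := by
        rw [hrecR k, map_sub, pow_succ' B, ContinuousLinearMap.mul_apply]
        abel
      rw [h1]
      calc ‖R ((ContinuousLinearMap.adjoint T) η) + B (e k - (B ^ k) (e 0))‖
          ≤ ‖R ((ContinuousLinearMap.adjoint T) η)‖ + ‖B (e k - (B ^ k) (e 0))‖ :=
            norm_add_le _ _
        _ ≤ ‖η‖ / (2 * Real.sqrt α) + k * (‖η‖ / (2 * Real.sqrt α)) :=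
            add_le_add (hRT η) ((hBnorm _).trans ih)
        _ = (k + 1 : ℕ) * (‖η‖ / (2 * Real.sqrt α)) := by push_cast; ring
  -- assembly
  have hfdagkey : (B ^ m) (e 0) = -(α ^ (n - 1) • Q ω) := by
    rw [he0, map_neg]
    congr 1
    have hsplit : B ^ m = B ^ (m - n + 1) * B ^ (n - 1) := by
      rw [← pow_add]; congr 1; omega
    rw [hsplit, ContinuousLinearMap.mul_apply, hkeyj, map_smul, hQapp]
  have h1 : ‖e m‖ ≤ ‖e m - (B ^ m) (e 0)‖ + ‖(B ^ m) (e 0)‖ := by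
    have h := norm_add_le (e m - (B ^ m) (e 0)) ((B ^ m) (e 0))
    simpa using h
  have h2 : ‖(B ^ m) (e 0)‖ = α ^ (n - 1) * s := by
    rw [hfdagkey, norm_neg, norm_smul, Real.norm_eq_abs, abs_of_pos (pow_pos hα _), hs]
  have h3 := mul_le_mul_of_nonneg_left hsle (pow_nonneg hα.le (n - 1))
  have h4 := hsum m
  calc ‖e m‖ ≤ α ^ (n - 1) * s + m * (‖η‖ / (2 * Real.sqrt α)) := by linarith
    _ ≤ (2 * A) ^ ((ν + 1) / 2) * (α ^ (n - 1) * α ^ (ν / 2))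
        + m * (‖η‖ / (2 * Real.sqrt α)) := by linarith


end

set_option maxHeartbeats 1000000

/-- Under the Hölder-type variational source condition
`VSC^{2n−1}(f†, A t^{ν/(ν+1)})`, Bregman iterated Tikhonov regularization with the
a-priori parameter choice `α = δ^{2/(2n−1+ν)}` yields the optimal convergence rate
`‖f_m − f†‖ ≤ C δ^{(2n−2+ν)/(2n−1+ν)}` for all `m ≥ n`. -/
theorem stmt_7 {X Y : Type*}
    [NormedAddCommGroup X] [InnerProductSpace ℝ X] [CompleteSpace X]
    [NormedAddCommGroup Y] [InnerProductSpace ℝ Y] [CompleteSpace Y]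
    (T : X →L[ℝ] Y) (fdag : X) (n m : ℕ) (hn : 1 ≤ n) (hnm : n ≤ m)
    (ν A : ℝ) (hν : ν ∈ Set.Ioc (0 : ℝ) 1) (hA : 0 < A)
    -- VSC^{2n−1}(f†, Φ) with Φ(t) = A t^{ν/(ν+1)}
    (hVSC : ∃ ω : X,
      fdag = ((ContinuousLinearMap.adjoint T ∘L T) ^ (n - 1)) ω ∧
      ∀ f : X, ⟪ω, f⟫ ≤ 1 / 2 * ‖f‖ ^ 2 + A * (‖T f‖ ^ 2) ^ (ν / (ν + 1))) :
    ∃ C : ℝ, 0 < C ∧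
      ∀ δ : ℝ, 0 < δ → ∀ g : Y, ‖g - T fdag‖ ≤ δ →
        -- Bregman iterated Tikhonov sequence for (g, α) with α = δ^{2/(2n−1+ν)}
        ∀ f : ℕ → X, f 0 = 0 →
          (∀ k : ℕ, 1 ≤ k → ∀ h : X,
            ‖T (f k) - g‖ ^ 2
                + δ ^ (2 / (2 * (n : ℝ) - 1 + ν)) * ‖f k - f (k - 1)‖ ^ 2
              ≤ ‖T h - g‖ ^ 2
                + δ ^ (2 / (2 * (n : ℝ) - 1 + ν)) * ‖h - f (k - 1)‖ ^ 2) →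
          ‖f m - fdag‖ ≤ C * δ ^ ((2 * (n : ℝ) - 2 + ν) / (2 * (n : ℝ) - 1 + ν)) := by
  obtain ⟨ω, hω, hVSC'⟩ := hVSC
  obtain ⟨hν0, hν1⟩ := hν
  have h2A : (0:ℝ) < 2 * A := by linarith
  refine ⟨(2 * A) ^ ((ν + 1) / 2) + m / 2 + 1, by positivity, ?_⟩
  intro δ hδ g hg f hf0 hmin
  have hn' : (1:ℝ) ≤ (n:ℝ) := by exact_mod_cast hn
  have hq : (0:ℝ) < 2 * (n:ℝ) - 1 + ν := by linarith
  set α := δ ^ (2 / (2 * (n : ℝ) - 1 + ν)) with hαdef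
  have hαpos : 0 < α := Real.rpow_pos_of_pos hδ _
  set η := g - T fdag with hη
  -- Euler equation
  have hEuler : ∀ k : ℕ, (ContinuousLinearMap.adjoint T) (T (f (k + 1)) - g)
      + α • (f (k + 1) - f k) = 0 := by
    intro k
    set a := T (f (k + 1)) - g with ha
    set c := f (k + 1) - f k with hc
    set G := (ContinuousLinearMap.adjoint T) a + α • c with hGdef
    have hkey : ∀ t : ℝ, 0 < t →
        2 * t * ‖G‖ ^ 2 ≤ t ^ 2 * (‖T G‖ ^ 2 + α * ‖G‖ ^ 2) := by
      intro t ht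
      have h0 := hmin (k + 1) (by omega) (f (k + 1) - t • G)
      simp only [Nat.add_sub_cancel] at h0
      have e1 : T (f (k + 1) - t • G) - g = a - t • T G := by
        rw [map_sub, map_smul, ha]; abel
      have e2 : f (k + 1) - t • G - f k = c - t • G := by
        rw [hc]; abel
      rw [e1, e2, expand_sq, expand_sq] at h0
      have e3 : ⟪a, T G⟫ + α * ⟪c, G⟫ = ‖G‖ ^ 2 := by
        calc ⟪a, T G⟫ + α * ⟪c, G⟫
            = ⟪(ContinuousLinearMap.adjoint T) a, G⟫ + ⟪α • c, G⟫ := by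
              rw [ContinuousLinearMap.adjoint_inner_left, real_inner_smul_left]
          _ = ⟪G, G⟫ := (inner_add_left _ _ _).symm
          _ = ‖G‖ ^ 2 := real_inner_self_eq_norm_sq _
      nlinarith [h0, e3]
    by_contra hG0
    have hGpos : 0 < ‖G‖ := norm_pos_iff.mpr hG0
    set cc := ‖T G‖ ^ 2 + α * ‖G‖ ^ 2 with hcc
    have hccpos : 0 < cc := by
      have : 0 < α * ‖G‖ ^ 2 := by positivity
      have := sq_nonneg ‖T G‖
      rw [hcc]; nlinarith
    have h2' := hkey (‖G‖ ^ 2 / cc) (by positivity)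
    have hs4 : (0:ℝ) < ‖G‖ ^ 2 := by positivity
    have hccne := hccpos.ne'
    have hexp : (‖G‖ ^ 2 / cc) ^ 2 * (‖T G‖ ^ 2 + α * ‖G‖ ^ 2) = (‖G‖ ^ 2) ^ 2 / cc := by
      rw [← hcc]; field_simp
    have h5' : 2 * (‖G‖ ^ 2 / cc) * ‖G‖ ^ 2 = 2 * (‖G‖ ^ 2) ^ 2 / cc := by ring
    rw [hexp, h5', div_le_div_iff₀ hccpos hccpos] at h2'
    nlinarith [hs4, hccpos, h2', mul_pos (pow_pos hs4 2) hccpos]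
  -- recursion for the error
  set e : ℕ → X := fun k => f k - fdag with he
  have he0 : e 0 = -(((ContinuousLinearMap.adjoint T ∘L T) ^ (n - 1)) ω) := by
    rw [he]; simp only [hf0, hω, zero_sub]
  have hrec : ∀ k : ℕ, (ContinuousLinearMap.adjoint T) (T (e (k + 1))) + α • e (k + 1)
      = (ContinuousLinearMap.adjoint T) η + α • e k := by
    intro k
    have h := hEuler k
    rw [map_sub, smul_sub] at h
    have h' : (ContinuousLinearMap.adjoint T) (T (f (k + 1))) + α • f (k + 1)
        = (ContinuousLinearMap.adjoint T) g + α • f k := by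
      apply eq_of_sub_eq_zero
      calc (ContinuousLinearMap.adjoint T) (T (f (k + 1))) + α • f (k + 1)
            - ((ContinuousLinearMap.adjoint T) g + α • f k)
          = (ContinuousLinearMap.adjoint T) (T (f (k + 1)))
            - (ContinuousLinearMap.adjoint T) g + (α • f (k + 1) - α • f k) := by abel
        _ = 0 := h
    show (ContinuousLinearMap.adjoint T) (T (f (k + 1) - fdag)) + α • (f (k + 1) - fdag)
        = (ContinuousLinearMap.adjoint T) (g - T fdag) + α • (f k - fdag)
    simp only [map_sub, smul_sub]
    calc (ContinuousLinearMap.adjoint T) (T (f (k + 1)))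
          - (ContinuousLinearMap.adjoint T) (T fdag)
          + (α • f (k + 1) - α • fdag)
        = ((ContinuousLinearMap.adjoint T) (T (f (k + 1))) + α • f (k + 1))
          - ((ContinuousLinearMap.adjoint T) (T fdag) + α • fdag) := by abel
      _ = ((ContinuousLinearMap.adjoint T) g + α • f k)
          - ((ContinuousLinearMap.adjoint T) (T fdag) + α • fdag) := by rw [h']
      _ = (ContinuousLinearMap.adjoint T) g - (ContinuousLinearMap.adjoint T) (T fdag)
          + (α • f k - α • fdag) := by abel
  have hbound := core T n m hn hnm ν A α hν0 hν1 hA hαpos ω hVSC' η e he0 hrec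
  -- exponent arithmetic
  have hqne : (2 * (n:ℝ) - 1 + ν) ≠ 0 := ne_of_gt hq
  have hsq : Real.sqrt α = δ ^ (1 / (2 * (n:ℝ) - 1 + ν)) := by
    rw [hαdef, Real.sqrt_eq_rpow, ← Real.rpow_mul hδ.le]
    congr 1
    field_simp
  have hterm1 : α ^ (n - 1) * α ^ (ν / 2 : ℝ)
      = δ ^ ((2 * (n:ℝ) - 2 + ν) / (2 * (n:ℝ) - 1 + ν)) := by
    rw [← Real.rpow_natCast α (n - 1), Nat.cast_sub hn, Nat.cast_one,
      ← Real.rpow_add hαpos, hαdef, ← Real.rpow_mul hδ.le]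
    congr 1
    field_simp
  have hnoise : δ / (2 * Real.sqrt α)
      = 1 / 2 * δ ^ ((2 * (n:ℝ) - 2 + ν) / (2 * (n:ℝ) - 1 + ν)) := by
    rw [hsq]
    have h1 : δ ^ ((2 * (n:ℝ) - 2 + ν) / (2 * (n:ℝ) - 1 + ν))
        = δ ^ (1:ℝ) / δ ^ (1 / (2 * (n:ℝ) - 1 + ν)) := by
      rw [← Real.rpow_sub hδ]
      congr 1
      field_simp
      ring
    rw [h1, Real.rpow_one]
    ring
  have hsqpos : 0 < Real.sqrt α := Real.sqrt_pos.mpr hαpos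
  have hηδ : ‖η‖ ≤ δ := hg
  have hnoise2 : (m:ℝ) * (‖η‖ / (2 * Real.sqrt α)) ≤ (m:ℝ) * (δ / (2 * Real.sqrt α)) := by
    gcongr
  have hδr : 0 < δ ^ ((2 * (n:ℝ) - 2 + ν) / (2 * (n:ℝ) - 1 + ν)) :=
    Real.rpow_pos_of_pos hδ _
  calc ‖f m - fdag‖
      ≤ (2 * A) ^ ((ν + 1) / 2) * (α ^ (n - 1) * α ^ (ν / 2 : ℝ))
        + m * (‖η‖ / (2 * Real.sqrt α)) := hbound
    _ ≤ (2 * A) ^ ((ν + 1) / 2) * (α ^ (n - 1) * α ^ (ν / 2 : ℝ))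
        + m * (δ / (2 * Real.sqrt α)) := by linarith [hnoise2]
    _ = (2 * A) ^ ((ν + 1) / 2) * δ ^ ((2 * (n:ℝ) - 2 + ν) / (2 * (n:ℝ) - 1 + ν))
        + m * (1 / 2 * δ ^ ((2 * (n:ℝ) - 2 + ν) / (2 * (n:ℝ) - 1 + ν))) := by
        rw [hterm1, hnoise]
    _ ≤ ((2 * A) ^ ((ν + 1) / 2) + m / 2 + 1)
        * δ ^ ((2 * (n:ℝ) - 2 + ν) / (2 * (n:ℝ) - 1 + ν)) := by nlinarith [hδr]
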